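/- There exist 8 pointwise orthonormal tangent vector fields on the sphere S^15; that is, there exist continuous maps V_1, …, V_8 from the unit sphere S^15 of EuclideanSpace ℝ (Fin 16) to EuclideanSpace ℝ (Fin 16) such that for every p ∈ S^15 and all i, j ∈ {1, …, 8}: ⟨V_i(p), p⟩ = 0, and ⟨V_i(p), V_j(p)⟩ = 1 if i = j and 0 if i ≠ j. -/

import Mathlib

open scoped RealInnerProductSpace

noncomputable def vf : Fin 8 → (Fin 16 → ℝ) → (Fin 16 → ℝ) := ![
  (fun p => ![-p 1, p 0, -p 3, p 2, -p 5, p 4, p 7, -p 6, p 9, -p 8, p 11, -p 10, p 13, -p 12, -p 15, p 14]),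
  (fun p => ![-p 2, p 3, p 0, -p 1, -p 6, -p 7, p 4, p 5, p 10, -p 11, -p 8, p 9, p 14, p 15, -p 12, -p 13]),
  (fun p => ![-p 3, -p 2, p 1, p 0, -p 7, p 6, -p 5, p 4, p 11, p 10, -p 9, -p 8, p 15, -p 14, p 13, -p 12]),
  (fun p => ![-p 4, p 5, p 6, p 7, p 0, -p 1, -p 2, -p 3, p 12, -p 13, -p 14, -p 15, -p 8, p 9, p 10, p 11]),
  (fun p => ![-p 5, -p 4, p 7, -p 6, p 1, p 0, p 3, -p 2, p 13, p 12, -p 15, p 14, -p 9, -p 8, -p 11, p 10]),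
  (fun p => ![-p 6, -p 7, -p 4, p 5, p 2, -p 3, p 0, p 1, p 14, p 15, p 12, -p 13, -p 10, p 11, -p 8, -p 9]),
  (fun p => ![-p 7, p 6, -p 5, -p 4, p 3, p 2, -p 1, p 0, p 15, -p 14, p 13, p 12, -p 11, -p 10, p 9, -p 8]),
  (fun p => ![p 8, p 9, p 10, p 11, p 12, p 13, p 14, p 15, -p 0, -p 1, -p 2, -p 3, -p 4, -p 5, -p 6, -p 7])]

lemma vf_0_0 (p : Fin 16 → ℝ) : vf 0 p 0 = -p 1 := rfl
lemma vf_0_1 (p : Fin 16 → ℝ) : vf 0 p 1 = p 0 := rfl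
lemma vf_0_2 (p : Fin 16 → ℝ) : vf 0 p 2 = -p 3 := rfl
lemma vf_0_3 (p : Fin 16 → ℝ) : vf 0 p 3 = p 2 := rfl
lemma vf_0_4 (p : Fin 16 → ℝ) : vf 0 p 4 = -p 5 := rfl
lemma vf_0_5 (p : Fin 16 → ℝ) : vf 0 p 5 = p 4 := rfl
lemma vf_0_6 (p : Fin 16 → ℝ) : vf 0 p 6 = p 7 := rfl
lemma vf_0_7 (p : Fin 16 → ℝ) : vf 0 p 7 = -p 6 := rfl
lemma vf_0_8 (p : Fin 16 → ℝ) : vf 0 p 8 = p 9 := rfl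
lemma vf_0_9 (p : Fin 16 → ℝ) : vf 0 p 9 = -p 8 := rfl
lemma vf_0_10 (p : Fin 16 → ℝ) : vf 0 p 10 = p 11 := rfl
lemma vf_0_11 (p : Fin 16 → ℝ) : vf 0 p 11 = -p 10 := rfl
lemma vf_0_12 (p : Fin 16 → ℝ) : vf 0 p 12 = p 13 := rfl
lemma vf_0_13 (p : Fin 16 → ℝ) : vf 0 p 13 = -p 12 := rfl
lemma vf_0_14 (p : Fin 16 → ℝ) : vf 0 p 14 = -p 15 := rfl
lemma vf_0_15 (p : Fin 16 → ℝ) : vf 0 p 15 = p 14 := rfl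
lemma vf_1_0 (p : Fin 16 → ℝ) : vf 1 p 0 = -p 2 := rfl
lemma vf_1_1 (p : Fin 16 → ℝ) : vf 1 p 1 = p 3 := rfl
lemma vf_1_2 (p : Fin 16 → ℝ) : vf 1 p 2 = p 0 := rfl
lemma vf_1_3 (p : Fin 16 → ℝ) : vf 1 p 3 = -p 1 := rfl
lemma vf_1_4 (p : Fin 16 → ℝ) : vf 1 p 4 = -p 6 := rfl
lemma vf_1_5 (p : Fin 16 → ℝ) : vf 1 p 5 = -p 7 := rfl
lemma vf_1_6 (p : Fin 16 → ℝ) : vf 1 p 6 = p 4 := rfl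
lemma vf_1_7 (p : Fin 16 → ℝ) : vf 1 p 7 = p 5 := rfl
lemma vf_1_8 (p : Fin 16 → ℝ) : vf 1 p 8 = p 10 := rfl
lemma vf_1_9 (p : Fin 16 → ℝ) : vf 1 p 9 = -p 11 := rfl
lemma vf_1_10 (p : Fin 16 → ℝ) : vf 1 p 10 = -p 8 := rfl
lemma vf_1_11 (p : Fin 16 → ℝ) : vf 1 p 11 = p 9 := rfl
lemma vf_1_12 (p : Fin 16 → ℝ) : vf 1 p 12 = p 14 := rfl
lemma vf_1_13 (p : Fin 16 → ℝ) : vf 1 p 13 = p 15 := rfl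
lemma vf_1_14 (p : Fin 16 → ℝ) : vf 1 p 14 = -p 12 := rfl
lemma vf_1_15 (p : Fin 16 → ℝ) : vf 1 p 15 = -p 13 := rfl
lemma vf_2_0 (p : Fin 16 → ℝ) : vf 2 p 0 = -p 3 := rfl
lemma vf_2_1 (p : Fin 16 → ℝ) : vf 2 p 1 = -p 2 := rfl
lemma vf_2_2 (p : Fin 16 → ℝ) : vf 2 p 2 = p 1 := rfl
lemma vf_2_3 (p : Fin 16 → ℝ) : vf 2 p 3 = p 0 := rfl
lemma vf_2_4 (p : Fin 16 → ℝ) : vf 2 p 4 = -p 7 := rfl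
lemma vf_2_5 (p : Fin 16 → ℝ) : vf 2 p 5 = p 6 := rfl
lemma vf_2_6 (p : Fin 16 → ℝ) : vf 2 p 6 = -p 5 := rfl
lemma vf_2_7 (p : Fin 16 → ℝ) : vf 2 p 7 = p 4 := rfl
lemma vf_2_8 (p : Fin 16 → ℝ) : vf 2 p 8 = p 11 := rfl
lemma vf_2_9 (p : Fin 16 → ℝ) : vf 2 p 9 = p 10 := rfl
lemma vf_2_10 (p : Fin 16 → ℝ) : vf 2 p 10 = -p 9 := rfl
lemma vf_2_11 (p : Fin 16 → ℝ) : vf 2 p 11 = -p 8 := rfl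
lemma vf_2_12 (p : Fin 16 → ℝ) : vf 2 p 12 = p 15 := rfl
lemma vf_2_13 (p : Fin 16 → ℝ) : vf 2 p 13 = -p 14 := rfl
lemma vf_2_14 (p : Fin 16 → ℝ) : vf 2 p 14 = p 13 := rfl
lemma vf_2_15 (p : Fin 16 → ℝ) : vf 2 p 15 = -p 12 := rfl
lemma vf_3_0 (p : Fin 16 → ℝ) : vf 3 p 0 = -p 4 := rfl
lemma vf_3_1 (p : Fin 16 → ℝ) : vf 3 p 1 = p 5 := rfl
lemma vf_3_2 (p : Fin 16 → ℝ) : vf 3 p 2 = p 6 := rfl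
lemma vf_3_3 (p : Fin 16 → ℝ) : vf 3 p 3 = p 7 := rfl
lemma vf_3_4 (p : Fin 16 → ℝ) : vf 3 p 4 = p 0 := rfl
lemma vf_3_5 (p : Fin 16 → ℝ) : vf 3 p 5 = -p 1 := rfl
lemma vf_3_6 (p : Fin 16 → ℝ) : vf 3 p 6 = -p 2 := rfl
lemma vf_3_7 (p : Fin 16 → ℝ) : vf 3 p 7 = -p 3 := rfl
lemma vf_3_8 (p : Fin 16 → ℝ) : vf 3 p 8 = p 12 := rfl
lemma vf_3_9 (p : Fin 16 → ℝ) : vf 3 p 9 = -p 13 := rfl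
lemma vf_3_10 (p : Fin 16 → ℝ) : vf 3 p 10 = -p 14 := rfl
lemma vf_3_11 (p : Fin 16 → ℝ) : vf 3 p 11 = -p 15 := rfl
lemma vf_3_12 (p : Fin 16 → ℝ) : vf 3 p 12 = -p 8 := rfl
lemma vf_3_13 (p : Fin 16 → ℝ) : vf 3 p 13 = p 9 := rfl
lemma vf_3_14 (p : Fin 16 → ℝ) : vf 3 p 14 = p 10 := rfl
lemma vf_3_15 (p : Fin 16 → ℝ) : vf 3 p 15 = p 11 := rfl
lemma vf_4_0 (p : Fin 16 → ℝ) : vf 4 p 0 = -p 5 := rfl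
lemma vf_4_1 (p : Fin 16 → ℝ) : vf 4 p 1 = -p 4 := rfl
lemma vf_4_2 (p : Fin 16 → ℝ) : vf 4 p 2 = p 7 := rfl
lemma vf_4_3 (p : Fin 16 → ℝ) : vf 4 p 3 = -p 6 := rfl
lemma vf_4_4 (p : Fin 16 → ℝ) : vf 4 p 4 = p 1 := rfl
lemma vf_4_5 (p : Fin 16 → ℝ) : vf 4 p 5 = p 0 := rfl
lemma vf_4_6 (p : Fin 16 → ℝ) : vf 4 p 6 = p 3 := rfl
lemma vf_4_7 (p : Fin 16 → ℝ) : vf 4 p 7 = -p 2 := rfl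
lemma vf_4_8 (p : Fin 16 → ℝ) : vf 4 p 8 = p 13 := rfl
lemma vf_4_9 (p : Fin 16 → ℝ) : vf 4 p 9 = p 12 := rfl
lemma vf_4_10 (p : Fin 16 → ℝ) : vf 4 p 10 = -p 15 := rfl
lemma vf_4_11 (p : Fin 16 → ℝ) : vf 4 p 11 = p 14 := rfl
lemma vf_4_12 (p : Fin 16 → ℝ) : vf 4 p 12 = -p 9 := rfl
lemma vf_4_13 (p : Fin 16 → ℝ) : vf 4 p 13 = -p 8 := rfl
lemma vf_4_14 (p : Fin 16 → ℝ) : vf 4 p 14 = -p 11 := rfl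
lemma vf_4_15 (p : Fin 16 → ℝ) : vf 4 p 15 = p 10 := rfl
lemma vf_5_0 (p : Fin 16 → ℝ) : vf 5 p 0 = -p 6 := rfl
lemma vf_5_1 (p : Fin 16 → ℝ) : vf 5 p 1 = -p 7 := rfl
lemma vf_5_2 (p : Fin 16 → ℝ) : vf 5 p 2 = -p 4 := rfl
lemma vf_5_3 (p : Fin 16 → ℝ) : vf 5 p 3 = p 5 := rfl
lemma vf_5_4 (p : Fin 16 → ℝ) : vf 5 p 4 = p 2 := rfl
lemma vf_5_5 (p : Fin 16 → ℝ) : vf 5 p 5 = -p 3 := rfl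
lemma vf_5_6 (p : Fin 16 → ℝ) : vf 5 p 6 = p 0 := rfl
lemma vf_5_7 (p : Fin 16 → ℝ) : vf 5 p 7 = p 1 := rfl
lemma vf_5_8 (p : Fin 16 → ℝ) : vf 5 p 8 = p 14 := rfl
lemma vf_5_9 (p : Fin 16 → ℝ) : vf 5 p 9 = p 15 := rfl
lemma vf_5_10 (p : Fin 16 → ℝ) : vf 5 p 10 = p 12 := rfl
lemma vf_5_11 (p : Fin 16 → ℝ) : vf 5 p 11 = -p 13 := rfl
lemma vf_5_12 (p : Fin 16 → ℝ) : vf 5 p 12 = -p 10 := rfl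
lemma vf_5_13 (p : Fin 16 → ℝ) : vf 5 p 13 = p 11 := rfl
lemma vf_5_14 (p : Fin 16 → ℝ) : vf 5 p 14 = -p 8 := rfl
lemma vf_5_15 (p : Fin 16 → ℝ) : vf 5 p 15 = -p 9 := rfl
lemma vf_6_0 (p : Fin 16 → ℝ) : vf 6 p 0 = -p 7 := rfl
lemma vf_6_1 (p : Fin 16 → ℝ) : vf 6 p 1 = p 6 := rfl
lemma vf_6_2 (p : Fin 16 → ℝ) : vf 6 p 2 = -p 5 := rfl
lemma vf_6_3 (p : Fin 16 → ℝ) : vf 6 p 3 = -p 4 := rfl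
lemma vf_6_4 (p : Fin 16 → ℝ) : vf 6 p 4 = p 3 := rfl
lemma vf_6_5 (p : Fin 16 → ℝ) : vf 6 p 5 = p 2 := rfl
lemma vf_6_6 (p : Fin 16 → ℝ) : vf 6 p 6 = -p 1 := rfl
lemma vf_6_7 (p : Fin 16 → ℝ) : vf 6 p 7 = p 0 := rfl
lemma vf_6_8 (p : Fin 16 → ℝ) : vf 6 p 8 = p 15 := rfl
lemma vf_6_9 (p : Fin 16 → ℝ) : vf 6 p 9 = -p 14 := rfl
lemma vf_6_10 (p : Fin 16 → ℝ) : vf 6 p 10 = p 13 := rfl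
lemma vf_6_11 (p : Fin 16 → ℝ) : vf 6 p 11 = p 12 := rfl
lemma vf_6_12 (p : Fin 16 → ℝ) : vf 6 p 12 = -p 11 := rfl
lemma vf_6_13 (p : Fin 16 → ℝ) : vf 6 p 13 = -p 10 := rfl
lemma vf_6_14 (p : Fin 16 → ℝ) : vf 6 p 14 = p 9 := rfl
lemma vf_6_15 (p : Fin 16 → ℝ) : vf 6 p 15 = -p 8 := rfl
lemma vf_7_0 (p : Fin 16 → ℝ) : vf 7 p 0 = p 8 := rfl
lemma vf_7_1 (p : Fin 16 → ℝ) : vf 7 p 1 = p 9 := rfl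
lemma vf_7_2 (p : Fin 16 → ℝ) : vf 7 p 2 = p 10 := rfl
lemma vf_7_3 (p : Fin 16 → ℝ) : vf 7 p 3 = p 11 := rfl
lemma vf_7_4 (p : Fin 16 → ℝ) : vf 7 p 4 = p 12 := rfl
lemma vf_7_5 (p : Fin 16 → ℝ) : vf 7 p 5 = p 13 := rfl
lemma vf_7_6 (p : Fin 16 → ℝ) : vf 7 p 6 = p 14 := rfl
lemma vf_7_7 (p : Fin 16 → ℝ) : vf 7 p 7 = p 15 := rfl
lemma vf_7_8 (p : Fin 16 → ℝ) : vf 7 p 8 = -p 0 := rfl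
lemma vf_7_9 (p : Fin 16 → ℝ) : vf 7 p 9 = -p 1 := rfl
lemma vf_7_10 (p : Fin 16 → ℝ) : vf 7 p 10 = -p 2 := rfl
lemma vf_7_11 (p : Fin 16 → ℝ) : vf 7 p 11 = -p 3 := rfl
lemma vf_7_12 (p : Fin 16 → ℝ) : vf 7 p 12 = -p 4 := rfl
lemma vf_7_13 (p : Fin 16 → ℝ) : vf 7 p 13 = -p 5 := rfl
lemma vf_7_14 (p : Fin 16 → ℝ) : vf 7 p 14 = -p 6 := rfl
lemma vf_7_15 (p : Fin 16 → ℝ) : vf 7 p 15 = -p 7 := rfl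

lemma sum_univ_nine (f : Fin 9 → ℝ) : ∑ i, f i = f 0 + f 1 + f 2 + f 3 + f 4 + f 5 + f 6 + f 7 + f 8 := by
  rw [Fin.sum_univ_castSucc, Fin.sum_univ_eight]; rfl

lemma sum_univ_ten (f : Fin 10 → ℝ) : ∑ i, f i = f 0 + f 1 + f 2 + f 3 + f 4 + f 5 + f 6 + f 7 + f 8 + f 9 := by
  rw [Fin.sum_univ_castSucc, sum_univ_nine]; rfl

lemma sum_univ_eleven (f : Fin 11 → ℝ) : ∑ i, f i = f 0 + f 1 + f 2 + f 3 + f 4 + f 5 + f 6 + f 7 + f 8 + f 9 + f 10 := by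
  rw [Fin.sum_univ_castSucc, sum_univ_ten]; rfl

lemma sum_univ_twelve (f : Fin 12 → ℝ) : ∑ i, f i = f 0 + f 1 + f 2 + f 3 + f 4 + f 5 + f 6 + f 7 + f 8 + f 9 + f 10 + f 11 := by
  rw [Fin.sum_univ_castSucc, sum_univ_eleven]; rfl

lemma sum_univ_thirteen (f : Fin 13 → ℝ) : ∑ i, f i = f 0 + f 1 + f 2 + f 3 + f 4 + f 5 + f 6 + f 7 + f 8 + f 9 + f 10 + f 11 + f 12 := by
  rw [Fin.sum_univ_castSucc, sum_univ_twelve]; rfl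

lemma sum_univ_fourteen (f : Fin 14 → ℝ) : ∑ i, f i = f 0 + f 1 + f 2 + f 3 + f 4 + f 5 + f 6 + f 7 + f 8 + f 9 + f 10 + f 11 + f 12 + f 13 := by
  rw [Fin.sum_univ_castSucc, sum_univ_thirteen]; rfl

lemma sum_univ_fifteen (f : Fin 15 → ℝ) : ∑ i, f i = f 0 + f 1 + f 2 + f 3 + f 4 + f 5 + f 6 + f 7 + f 8 + f 9 + f 10 + f 11 + f 12 + f 13 + f 14 := by
  rw [Fin.sum_univ_castSucc, sum_univ_fourteen]; rfl

lemma sum_univ_sixteen (f : Fin 16 → ℝ) : ∑ i, f i = f 0 + f 1 + f 2 + f 3 + f 4 + f 5 + f 6 + f 7 + f 8 + f 9 + f 10 + f 11 + f 12 + f 13 + f 14 + f 15 := by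
  rw [Fin.sum_univ_castSucc, sum_univ_fifteen]; rfl

lemma fin8_cases (i : Fin 8) : i = 0 ∨ i = 1 ∨ i = 2 ∨ i = 3 ∨ i = 4 ∨ i = 5 ∨ i = 6 ∨ i = 7 := by revert i; decide

lemma fin16_cases (k : Fin 16) : k = 0 ∨ k = 1 ∨ k = 2 ∨ k = 3 ∨ k = 4 ∨ k = 5 ∨ k = 6 ∨ k = 7 ∨ k = 8 ∨ k = 9 ∨ k = 10 ∨ k = 11 ∨ k = 12 ∨ k = 13 ∨ k = 14 ∨ k = 15 := by revert k; decide

lemma vf_tangent (i : Fin 8) (p : Fin 16 → ℝ) :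
    ∑ k : Fin 16, vf i p k * p k = 0 := by
  rcases fin8_cases i with rfl|rfl|rfl|rfl|rfl|rfl|rfl|rfl <;>
    · rw [sum_univ_sixteen]
      simp only [vf_0_0, vf_0_1, vf_0_2, vf_0_3, vf_0_4, vf_0_5, vf_0_6, vf_0_7, vf_0_8, vf_0_9, vf_0_10, vf_0_11, vf_0_12, vf_0_13, vf_0_14, vf_0_15, vf_1_0, vf_1_1, vf_1_2, vf_1_3, vf_1_4, vf_1_5, vf_1_6, vf_1_7, vf_1_8, vf_1_9, vf_1_10, vf_1_11, vf_1_12, vf_1_13, vf_1_14, vf_1_15, vf_2_0, vf_2_1, vf_2_2, vf_2_3, vf_2_4, vf_2_5, vf_2_6, vf_2_7, vf_2_8, vf_2_9, vf_2_10, vf_2_11, vf_2_12, vf_2_13, vf_2_14, vf_2_15, vf_3_0, vf_3_1, vf_3_2, vf_3_3, vf_3_4, vf_3_5, vf_3_6, vf_3_7, vf_3_8, vf_3_9, vf_3_10, vf_3_11, vf_3_12, vf_3_13, vf_3_14, vf_3_15, vf_4_0, vf_4_1, vf_4_2, vf_4_3, vf_4_4, vf_4_5, vf_4_6, vf_4_7,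 vf_4_8, vf_4_9, vf_4_10, vf_4_11, vf_4_12, vf_4_13, vf_4_14, vf_4_15, vf_5_0, vf_5_1, vf_5_2, vf_5_3, vf_5_4, vf_5_5, vf_5_6, vf_5_7, vf_5_8, vf_5_9, vf_5_10, vf_5_11, vf_5_12, vf_5_13, vf_5_14, vf_5_15, vf_6_0, vf_6_1, vf_6_2, vf_6_3, vf_6_4, vf_6_5, vf_6_6, vf_6_7, vf_6_8, vf_6_9, vf_6_10, vf_6_11, vf_6_12, vf_6_13, vf_6_14, vf_6_15, vf_7_0, vf_7_1, vf_7_2, vf_7_3, vf_7_4, vf_7_5, vf_7_6, vf_7_7, vf_7_8, vf_7_9, vf_7_10, vf_7_11, vf_7_12, vf_7_13, vf_7_14, vf_7_15]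
      ring

lemma vf_inner (i j : Fin 8) (p : Fin 16 → ℝ) :
    ∑ k : Fin 16, vf i p k * vf j p k =
      (if i = j then 1 else 0) * ∑ k : Fin 16, p k * p k := by
  rcases fin8_cases i with rfl|rfl|rfl|rfl|rfl|rfl|rfl|rfl <;>
    rcases fin8_cases j with rfl|rfl|rfl|rfl|rfl|rfl|rfl|rfl <;>
    · first
        | (rw [if_pos rfl, sum_univ_sixteen, sum_univ_sixteen]
           simp only [vf_0_0, vf_0_1, vf_0_2, vf_0_3, vf_0_4, vf_0_5, vf_0_6, vf_0_7, vf_0_8, vf_0_9, vf_0_10, vf_0_11, vf_0_12, vf_0_13, vf_0_14, vf_0_15, vf_1_0, vf_1_1, vf_1_2, vf_1_3, vf_1_4, vf_1_5, vf_1_6, vf_1_7, vf_1_8, vf_1_9, vf_1_10, vf_1_11, vf_1_12, vf_1_13, vf_1_14, vf_1_15, vf_2_0, vf_2_1, vf_2_2, vf_2_3, vf_2_4, vf_2_5, vf_2_6, vf_2_7, vf_2_8, vf_2_9, vf_2_10, vf_2_11, vf_2_12, vf_2_13, vf_2_14, vf_2_15, vf_3_0, vf_3_1, vf_3_2, vf_3_3,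 vf_3_4, vf_3_5, vf_3_6, vf_3_7, vf_3_8, vf_3_9, vf_3_10, vf_3_11, vf_3_12, vf_3_13, vf_3_14, vf_3_15, vf_4_0, vf_4_1, vf_4_2, vf_4_3, vf_4_4, vf_4_5, vf_4_6, vf_4_7, vf_4_8, vf_4_9, vf_4_10, vf_4_11, vf_4_12, vf_4_13, vf_4_14, vf_4_15, vf_5_0, vf_5_1, vf_5_2, vf_5_3, vf_5_4, vf_5_5, vf_5_6, vf_5_7, vf_5_8, vf_5_9, vf_5_10, vf_5_11, vf_5_12, vf_5_13, vf_5_14, vf_5_15, vf_6_0, vf_6_1, vf_6_2, vf_6_3, vf_6_4, vf_6_5, vf_6_6, vf_6_7, vf_6_8, vf_6_9, vf_6_10, vf_6_11, vf_6_12, vf_6_13, vf_6_14, vf_6_15, vf_7_0, vf_7_1, vf_7_2, vf_7_3, vf_7_4, vf_7_5, vf_7_6, vf_7_7, vf_7_8, vf_7_9, vf_7_10, vf_7_11, vf_7_12, vf_7_13, vf_7_14, vf_7_15]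
           ring)
        | (rw [if_neg (by decide), sum_univ_sixteen]
           simp only [vf_0_0, vf_0_1, vf_0_2, vf_0_3, vf_0_4, vf_0_5, vf_0_6, vf_0_7, vf_0_8, vf_0_9, vf_0_10, vf_0_11, vf_0_12, vf_0_13, vf_0_14, vf_0_15, vf_1_0, vf_1_1, vf_1_2, vf_1_3, vf_1_4, vf_1_5, vf_1_6, vf_1_7, vf_1_8, vf_1_9, vf_1_10, vf_1_11, vf_1_12, vf_1_13, vf_1_14, vf_1_15, vf_2_0, vf_2_1, vf_2_2, vf_2_3, vf_2_4, vf_2_5, vf_2_6, vf_2_7, vf_2_8, vf_2_9, vf_2_10, vf_2_11, vf_2_12, vf_2_13, vf_2_14, vf_2_15, vf_3_0, vf_3_1, vf_3_2, vf_3_3, vf_3_4, vf_3_5, vf_3_6, vf_3_7, vf_3_8, vf_3_9, vf_3_10, vf_3_11, vf_3_12, vf_3_13, vf_3_14, vf_3_15, vf_4_0, vf_4_1, vf_4_2, vf_4_3, vf_4_4, vf_4_5, vf_4_6, vf_4_7, vf_4_8, vf_4_9, vf_4_10, vf_4_11, vf_4_12, vf_4_13, vf_4_14, vf_4_15, vf_5_0,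 vf_5_1, vf_5_2, vf_5_3, vf_5_4, vf_5_5, vf_5_6, vf_5_7, vf_5_8, vf_5_9, vf_5_10, vf_5_11, vf_5_12, vf_5_13, vf_5_14, vf_5_15, vf_6_0, vf_6_1, vf_6_2, vf_6_3, vf_6_4, vf_6_5, vf_6_6, vf_6_7, vf_6_8, vf_6_9, vf_6_10, vf_6_11, vf_6_12, vf_6_13, vf_6_14, vf_6_15, vf_7_0, vf_7_1, vf_7_2, vf_7_3, vf_7_4, vf_7_5, vf_7_6, vf_7_7, vf_7_8, vf_7_9, vf_7_10, vf_7_11, vf_7_12, vf_7_13, vf_7_14, vf_7_15]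
           ring)

lemma vf_cont (i : Fin 8) : Continuous (vf i) := by
  rcases fin8_cases i with rfl|rfl|rfl|rfl|rfl|rfl|rfl|rfl <;>
    · apply continuous_pi
      intro k
      rcases fin16_cases k with rfl|rfl|rfl|rfl|rfl|rfl|rfl|rfl|rfl|rfl|rfl|rfl|rfl|rfl|rfl|rfl <;>
        simp only [vf_0_0, vf_0_1, vf_0_2, vf_0_3, vf_0_4, vf_0_5, vf_0_6, vf_0_7, vf_0_8, vf_0_9, vf_0_10, vf_0_11, vf_0_12, vf_0_13, vf_0_14, vf_0_15, vf_1_0, vf_1_1, vf_1_2, vf_1_3, vf_1_4, vf_1_5, vf_1_6, vf_1_7, vf_1_8, vf_1_9, vf_1_10, vf_1_11, vf_1_12, vf_1_13, vf_1_14, vf_1_15, vf_2_0, vf_2_1, vf_2_2, vf_2_3, vf_2_4, vf_2_5, vf_2_6, vf_2_7, vf_2_8, vf_2_9, vf_2_10, vf_2_11, vf_2_12, vf_2_13, vf_2_14, vf_2_15, vf_3_0, vf_3_1, vf_3_2, vf_3_3, vf_3_4, vf_3_5, vf_3_6, vf_3_7, vf_3_8, vf_3_9, vf_3_10, vf_3_11,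 vf_3_12, vf_3_13, vf_3_14, vf_3_15, vf_4_0, vf_4_1, vf_4_2, vf_4_3, vf_4_4, vf_4_5, vf_4_6, vf_4_7, vf_4_8, vf_4_9, vf_4_10, vf_4_11, vf_4_12, vf_4_13, vf_4_14, vf_4_15, vf_5_0, vf_5_1, vf_5_2, vf_5_3, vf_5_4, vf_5_5, vf_5_6, vf_5_7, vf_5_8, vf_5_9, vf_5_10, vf_5_11, vf_5_12, vf_5_13, vf_5_14, vf_5_15, vf_6_0, vf_6_1, vf_6_2, vf_6_3, vf_6_4, vf_6_5, vf_6_6, vf_6_7, vf_6_8, vf_6_9, vf_6_10, vf_6_11, vf_6_12, vf_6_13, vf_6_14, vf_6_15, vf_7_0, vf_7_1, vf_7_2, vf_7_3, vf_7_4, vf_7_5, vf_7_6, vf_7_7, vf_7_8, vf_7_9, vf_7_10, vf_7_11, vf_7_12, vf_7_13, vf_7_14, vf_7_15] <;>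
        first
          | exact (continuous_apply _)
          | exact (continuous_apply _).neg

/-- There exist 8 pointwise orthonormal tangent vector fields on the
sphere `S^15`: continuous maps `V i` from the unit sphere of `EuclideanSpace ℝ (Fin 16)`
to `EuclideanSpace ℝ (Fin 16)` with `⟪V i p, p⟫ = 0` and `⟪V i p, V j p⟫ = δᵢⱼ`
at every point `p` of the sphere. -/
theorem exists_eight_orthonormal_tangent_fields_on_S15 :
    ∃ V : Fin 8 →
        (Metric.sphere (0 : EuclideanSpace ℝ (Fin 16)) 1 → EuclideanSpace ℝ (Fin 16)),
      (∀ i, Continuous (V i)) ∧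
      (∀ i, ∀ p : Metric.sphere (0 : EuclideanSpace ℝ (Fin 16)) 1,
        ⟪V i p, (p : EuclideanSpace ℝ (Fin 16))⟫ = 0) ∧
      (∀ i j, ∀ p : Metric.sphere (0 : EuclideanSpace ℝ (Fin 16)) 1,
        ⟪V i p, V j p⟫ = if i = j then 1 else 0) := by
  classical
  refine ⟨fun i p => (WithLp.equiv 2 (Fin 16 → ℝ)).symm
      (vf i ((WithLp.equiv 2 (Fin 16 → ℝ)) (p : EuclideanSpace ℝ (Fin 16)))), ?_, ?_, ?_⟩
  · intro i
    exact (PiLp.continuous_toLp 2 (fun _ : Fin 16 => ℝ)).comp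
      ((vf_cont i).comp ((PiLp.continuous_ofLp 2 (fun _ : Fin 16 => ℝ)).comp
        continuous_subtype_val))
  · intro i p
    have h := vf_tangent i ((WithLp.equiv 2 (Fin 16 → ℝ)) (p : EuclideanSpace ℝ (Fin 16)))
    simp only [PiLp.inner_apply, RCLike.inner_apply, conj_trivial,
      WithLp.equiv_symm_apply, WithLp.ofLp_toLp]
    exact (Finset.sum_congr rfl (fun k _ => mul_comm _ _)).trans h
  · intro i j p
    have hp : ∑ k : Fin 16,
        ((WithLp.equiv 2 (Fin 16 → ℝ)) (p : EuclideanSpace ℝ (Fin 16))) k *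
        ((WithLp.equiv 2 (Fin 16 → ℝ)) (p : EuclideanSpace ℝ (Fin 16))) k = 1 := by
      have hn : ‖(p : EuclideanSpace ℝ (Fin 16))‖ = 1 := by
        simpa using mem_sphere_zero_iff_norm.mp p.2
      have h1 : ⟪(p : EuclideanSpace ℝ (Fin 16)), (p : EuclideanSpace ℝ (Fin 16))⟫ = 1 := by
        rw [real_inner_self_eq_norm_sq, hn]; norm_num
      simp only [PiLp.inner_apply, RCLike.inner_apply, conj_trivial] at h1
      exact h1
    have h := vf_inner i j ((WithLp.equiv 2 (Fin 16 → ℝ)) (p : EuclideanSpace ℝ (Fin 16)))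
    rw [hp, mul_one] at h
    simp only [PiLp.inner_apply, RCLike.inner_apply, conj_trivial,
      WithLp.equiv_symm_apply, WithLp.ofLp_toLp]
    exact (Finset.sum_congr rfl (fun k _ => mul_comm _ _)).trans h
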